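/- In U₂ = k⟨x₁,x₂⟩/(g₁, g₂ + z), where g₁ = x₁²x₂ − 2x₁x₂x₁ + x₂x₁² − x₂x₁x₂ + x₂²x₁, g₂ = x₁x₂² − 2x₂x₁x₂ + x₂²x₁ and z = x₁x₂ − x₂x₁, the assignment x₁ ↦ x₁ + x₂ + 1, x₂ ↦ x₂ + 1 extends to a well-defined algebra automorphism of U₂. -/
import Mathlib

/-- The defining relations of `U₂ = k⟨x₁,x₂⟩/(g₁, g₂ + z)` where
`g₁ = x₁²x₂ − 2x₁x₂x₁ + x₂x₁² − x₂x₁x₂ + x₂²x₁`,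
`g₂ = x₁x₂² − 2x₂x₁x₂ + x₂²x₁` and `z = x₁x₂ − x₂x₁`. -/
def u2Rel (k : Type*) [Field k] :
    FreeAlgebra k (Fin 2) → FreeAlgebra k (Fin 2) → Prop := fun u v =>
  (u = FreeAlgebra.ι k 0 * FreeAlgebra.ι k 0 * FreeAlgebra.ι k 1 -
        (2 : k) • (FreeAlgebra.ι k 0 * FreeAlgebra.ι k 1 * FreeAlgebra.ι k 0) +
        FreeAlgebra.ι k 1 * FreeAlgebra.ι k 0 * FreeAlgebra.ι k 0 -
        FreeAlgebra.ι k 1 * FreeAlgebra.ι k 0 * FreeAlgebra.ι k 1 +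
        FreeAlgebra.ι k 1 * FreeAlgebra.ι k 1 * FreeAlgebra.ι k 0 ∧ v = 0) ∨
  (u = FreeAlgebra.ι k 0 * FreeAlgebra.ι k 1 * FreeAlgebra.ι k 1 -
        (2 : k) • (FreeAlgebra.ι k 1 * FreeAlgebra.ι k 0 * FreeAlgebra.ι k 1) +
        FreeAlgebra.ι k 1 * FreeAlgebra.ι k 1 * FreeAlgebra.ι k 0 +
        (FreeAlgebra.ι k 0 * FreeAlgebra.ι k 1 - FreeAlgebra.ι k 1 * FreeAlgebra.ι k 0) ∧
    v = 0)

section Aux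

variable {k : Type*} [Field k] {A : Type*} [Ring A] [Algebra k A]

/-- g₁(a+b+1, b+1) = g₁(a,b) − (g₂+z)(a,b). -/
lemma u2_keyF1 (a b : A)
    (h1 : a * a * b - (a * b * a + a * b * a) + b * a * a - b * a * b + b * b * a = 0)
    (h2 : a * b * b - (b * a * b + b * a * b) + b * b * a + (a * b - b * a) = 0) :
    (a + b + 1) * (a + b + 1) * (b + 1) -
      ((a + b + 1) * (b + 1) * (a + b + 1) + (a + b + 1) * (b + 1) * (a + b + 1)) +
      (b + 1) * (a + b + 1) * (a + b + 1) - (b + 1) * (a + b + 1) * (b + 1) +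
      (b + 1) * (b + 1) * (a + b + 1) = 0 := by
  have e : (a + b + 1) * (a + b + 1) * (b + 1) -
      ((a + b + 1) * (b + 1) * (a + b + 1) + (a + b + 1) * (b + 1) * (a + b + 1)) +
      (b + 1) * (a + b + 1) * (a + b + 1) - (b + 1) * (a + b + 1) * (b + 1) +
      (b + 1) * (b + 1) * (a + b + 1) =
      (a * a * b - (a * b * a + a * b * a) + b * a * a - b * a * b + b * b * a) -
      (a * b * b - (b * a * b + b * a * b) + b * b * a + (a * b - b * a)) := by
    noncomm_ring
  rw [e, h1, h2, sub_zero]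

/-- (g₂+z)(a+b+1, b+1) = (g₂+z)(a,b). -/
lemma u2_keyF2 (a b : A)
    (h2 : a * b * b - (b * a * b + b * a * b) + b * b * a + (a * b - b * a) = 0) :
    (a + b + 1) * (b + 1) * (b + 1) -
      ((b + 1) * (a + b + 1) * (b + 1) + (b + 1) * (a + b + 1) * (b + 1)) +
      (b + 1) * (b + 1) * (a + b + 1) +
      ((a + b + 1) * (b + 1) - (b + 1) * (a + b + 1)) = 0 := by
  have e : (a + b + 1) * (b + 1) * (b + 1) -
      ((b + 1) * (a + b + 1) * (b + 1) + (b + 1) * (a + b + 1) * (b + 1)) +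
      (b + 1) * (b + 1) * (a + b + 1) +
      ((a + b + 1) * (b + 1) - (b + 1) * (a + b + 1)) =
      a * b * b - (b * a * b + b * a * b) + b * b * a + (a * b - b * a) := by
    noncomm_ring
  rw [e, h2]

/-- g₁(a−b, b−1) = g₁(a,b) + (g₂+z)(a,b). -/
lemma u2_keyG1 (a b : A)
    (h1 : a * a * b - (a * b * a + a * b * a) + b * a * a - b * a * b + b * b * a = 0)
    (h2 : a * b * b - (b * a * b + b * a * b) + b * b * a + (a * b - b * a) = 0) :
    (a - b) * (a - b) * (b - 1) -
      ((a - b) * (b - 1) * (a - b) + (a - b) * (b - 1) * (a - b)) +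
      (b - 1) * (a - b) * (a - b) - (b - 1) * (a - b) * (b - 1) +
      (b - 1) * (b - 1) * (a - b) = 0 := by
  have e : (a - b) * (a - b) * (b - 1) -
      ((a - b) * (b - 1) * (a - b) + (a - b) * (b - 1) * (a - b)) +
      (b - 1) * (a - b) * (a - b) - (b - 1) * (a - b) * (b - 1) +
      (b - 1) * (b - 1) * (a - b) =
      (a * a * b - (a * b * a + a * b * a) + b * a * a - b * a * b + b * b * a) +
      (a * b * b - (b * a * b + b * a * b) + b * b * a + (a * b - b * a)) := by
    noncomm_ring
  rw [e, h1, h2, add_zero]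

/-- (g₂+z)(a−b, b−1) = (g₂+z)(a,b). -/
lemma u2_keyG2 (a b : A)
    (h2 : a * b * b - (b * a * b + b * a * b) + b * b * a + (a * b - b * a) = 0) :
    (a - b) * (b - 1) * (b - 1) -
      ((b - 1) * (a - b) * (b - 1) + (b - 1) * (a - b) * (b - 1)) +
      (b - 1) * (b - 1) * (a - b) +
      ((a - b) * (b - 1) - (b - 1) * (a - b)) = 0 := by
  have e : (a - b) * (b - 1) * (b - 1) -
      ((b - 1) * (a - b) * (b - 1) + (b - 1) * (a - b) * (b - 1)) +
      (b - 1) * (b - 1) * (a - b) +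
      ((a - b) * (b - 1) - (b - 1) * (a - b)) =
      a * b * b - (b * a * b + b * a * b) + b * b * a + (a * b - b * a) := by
    noncomm_ring
  rw [e, h2]

end Aux

/-- in `U₂ = k⟨x₁,x₂⟩/(g₁, g₂ + z)`, the assignment
`x₁ ↦ x₁ + x₂ + 1`, `x₂ ↦ x₂ + 1` extends to an algebra automorphism. -/
theorem stmt12 (k : Type*) [Field k] [IsAlgClosed k] [CharZero k] :
    ∃ φ : RingQuot (u2Rel k) ≃ₐ[k] RingQuot (u2Rel k),
      φ (RingQuot.mkAlgHom k _ (FreeAlgebra.ι k 0)) =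
        RingQuot.mkAlgHom k _ (FreeAlgebra.ι k 0) +
        RingQuot.mkAlgHom k _ (FreeAlgebra.ι k 1) +
        algebraMap k (RingQuot (u2Rel k)) 1 ∧
      φ (RingQuot.mkAlgHom k _ (FreeAlgebra.ι k 1)) =
        RingQuot.mkAlgHom k _ (FreeAlgebra.ι k 1) + algebraMap k (RingQuot (u2Rel k)) 1 := by
  set m : FreeAlgebra k (Fin 2) →ₐ[k] RingQuot (u2Rel k) :=
    RingQuot.mkAlgHom k (u2Rel k) with hm
  set a : RingQuot (u2Rel k) := m (FreeAlgebra.ι k 0) with ha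
  set b : RingQuot (u2Rel k) := m (FreeAlgebra.ι k 1) with hb
  have h1 : a * a * b - (a * b * a + a * b * a) + b * a * a - b * a * b + b * b * a = 0 := by
    have := RingQuot.mkAlgHom_rel k (s := u2Rel k)
      (Or.inl ⟨rfl, rfl⟩ : u2Rel k
        (FreeAlgebra.ι k 0 * FreeAlgebra.ι k 0 * FreeAlgebra.ι k 1 -
          (2 : k) • (FreeAlgebra.ι k 0 * FreeAlgebra.ι k 1 * FreeAlgebra.ι k 0) +
          FreeAlgebra.ι k 1 * FreeAlgebra.ι k 0 * FreeAlgebra.ι k 0 -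
          FreeAlgebra.ι k 1 * FreeAlgebra.ι k 0 * FreeAlgebra.ι k 1 +
          FreeAlgebra.ι k 1 * FreeAlgebra.ι k 1 * FreeAlgebra.ι k 0) 0)
    simpa [map_sub, map_add, map_mul, map_smul, two_smul, ← ha, ← hb, ← hm] using this
  have h2 : a * b * b - (b * a * b + b * a * b) + b * b * a + (a * b - b * a) = 0 := by
    have := RingQuot.mkAlgHom_rel k (s := u2Rel k)
      (Or.inr ⟨rfl, rfl⟩ : u2Rel k
        (FreeAlgebra.ι k 0 * FreeAlgebra.ι k 1 * FreeAlgebra.ι k 1 -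
          (2 : k) • (FreeAlgebra.ι k 1 * FreeAlgebra.ι k 0 * FreeAlgebra.ι k 1) +
          FreeAlgebra.ι k 1 * FreeAlgebra.ι k 1 * FreeAlgebra.ι k 0 +
          (FreeAlgebra.ι k 0 * FreeAlgebra.ι k 1 - FreeAlgebra.ι k 1 * FreeAlgebra.ι k 0)) 0)
    simpa [map_sub, map_add, map_mul, map_smul, two_smul, ← ha, ← hb, ← hm] using this
  -- forward map
  set φ₀ : FreeAlgebra k (Fin 2) →ₐ[k] RingQuot (u2Rel k) :=
    FreeAlgebra.lift k ![a + b + 1, b + 1] with hφ₀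
  have hφ : ∀ ⦃x y⦄, u2Rel k x y → φ₀ x = φ₀ y := by
    rintro x y (⟨rfl, rfl⟩ | ⟨rfl, rfl⟩)
    · simpa [hφ₀, map_sub, map_add, map_mul, map_smul, two_smul] using u2_keyF1 a b h1 h2
    · simpa [hφ₀, map_sub, map_add, map_mul, map_smul, two_smul] using u2_keyF2 a b h2
  set ψ₀ : FreeAlgebra k (Fin 2) →ₐ[k] RingQuot (u2Rel k) :=
    FreeAlgebra.lift k ![a - b, b - 1] with hψ₀
  have hψ : ∀ ⦃x y⦄, u2Rel k x y → ψ₀ x = ψ₀ y := by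
    rintro x y (⟨rfl, rfl⟩ | ⟨rfl, rfl⟩)
    · simpa [hψ₀, map_sub, map_add, map_mul, map_smul, two_smul] using u2_keyG1 a b h1 h2
    · simpa [hψ₀, map_sub, map_add, map_mul, map_smul, two_smul] using u2_keyG2 a b h2
  set φ : RingQuot (u2Rel k) →ₐ[k] RingQuot (u2Rel k) :=
    RingQuot.liftAlgHom k ⟨φ₀, hφ⟩ with hφdef
  set ψ : RingQuot (u2Rel k) →ₐ[k] RingQuot (u2Rel k) :=
    RingQuot.liftAlgHom k ⟨ψ₀, hψ⟩ with hψdef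
  have hφa : φ a = a + b + 1 := by
    simp [hφdef, ha, hm, RingQuot.liftAlgHom_mkAlgHom_apply, hφ₀]
  have hφb : φ b = b + 1 := by
    simp [hφdef, hb, hm, RingQuot.liftAlgHom_mkAlgHom_apply, hφ₀]
  have hψa : ψ a = a - b := by
    simp [hψdef, ha, hm, RingQuot.liftAlgHom_mkAlgHom_apply, hψ₀]
  have hψb : ψ b = b - 1 := by
    simp [hψdef, hb, hm, RingQuot.liftAlgHom_mkAlgHom_apply, hψ₀]
  have comp1 : φ.comp ψ = AlgHom.id k (RingQuot (u2Rel k)) := by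
    apply RingQuot.ringQuot_ext'
    apply FreeAlgebra.hom_ext
    funext i
    fin_cases i <;>
      simp [← hm, ← ha, ← hb, hψa, hψb, hφa, hφb, map_sub, map_one]
  have comp2 : ψ.comp φ = AlgHom.id k (RingQuot (u2Rel k)) := by
    apply RingQuot.ringQuot_ext'
    apply FreeAlgebra.hom_ext
    funext i
    fin_cases i <;>
      simp [← hm, ← ha, ← hb, hψa, hψb, hφa, hφb, map_add, map_one, map_sub]
  refine ⟨AlgEquiv.ofAlgHom φ ψ comp1 comp2, ?_, ?_⟩
  · simpa [← hm, ← ha, ← hb, map_one] using hφa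
  · simpa [← hm, ← hb, map_one] using hφb
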